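/- If n is an odd non-deficient number, then S(n) > 3/(5·√n). -/

import Mathlib

/-- The sum of the positive divisors of `n`. -/
def sigma1 (n : ℕ) : ℕ := ∑ d ∈ n.divisors, d

/-- `H n = n / φ(n)`. -/
noncomputable def H (n : ℕ) : ℝ := (n : ℝ) / (Nat.totient n : ℝ)

/-- The surplus `S n = H n - 2`. -/
noncomputable def S (n : ℕ) : ℝ := H n - 2

open Finset in
private lemma geom_aux (p e : ℕ) :
    (p - 1) * ∑ k ∈ Finset.range (e + 1), p ^ k = p ^ (e + 1) - 1 := by
  induction e with
  | zero => simp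
  | succ e ih =>
    rw [Finset.sum_range_succ, Nat.mul_add, ih, pow_succ p (e+1)]
    rcases Nat.eq_zero_or_pos p with h | h
    · subst h; simp
    · have hx : 1 ≤ p ^ (e + 1) := Nat.one_le_pow _ _ h
      have h2 : (p - 1) * p ^ (e + 1) = p ^ (e + 1) * p - p ^ (e + 1) := by
        rw [Nat.sub_mul, one_mul, mul_comm]
      rw [h2]
      have h3 : p ^ (e + 1) ≤ p ^ (e + 1) * p := Nat.le_mul_of_pos_right _ h
      generalize hX : p ^ (e + 1) = x at *
      generalize hY : x * p = y at *
      omega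

open Finset in
private lemma sigma1_eq_prod {n : ℕ} (hn : n ≠ 0) :
    sigma1 n = ∏ p ∈ n.primeFactors, ∑ k ∈ Finset.range (n.factorization p + 1), p ^ k :=
  Nat.sum_divisors hn

open Finset in
private lemma totient_eq_prod {n : ℕ} (hn : n ≠ 0) :
    n.totient = ∏ p ∈ n.primeFactors, p ^ (n.factorization p - 1) * (p - 1) := by
  rw [Nat.totient_eq_prod_factorization hn, Finsupp.prod, Nat.support_factorization]

open Finset in
private lemma n_eq_prod {n : ℕ} (hn : n ≠ 0) :
    n = ∏ p ∈ n.primeFactors, p ^ (n.factorization p) := by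
  conv_lhs => rw [← Nat.factorization_prod_pow_eq_self hn]
  rw [Finsupp.prod, Nat.support_factorization]

open Finset in
private lemma sigma_totient_eq_prod {n : ℕ} (hn : n ≠ 0) :
    sigma1 n * n.totient
      = ∏ p ∈ n.primeFactors, ((p ^ (n.factorization p + 1) - 1) * p ^ (n.factorization p - 1)) := by
  rw [sigma1_eq_prod hn, totient_eq_prod hn, ← Finset.prod_mul_distrib]
  refine Finset.prod_congr rfl fun q hq => ?_
  have : (∑ k ∈ Finset.range (n.factorization q + 1), q ^ k) *
      (q ^ (n.factorization q - 1) * (q - 1))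
      = ((q - 1) * ∑ k ∈ Finset.range (n.factorization q + 1), q ^ k) *
        q ^ (n.factorization q - 1) := by ring
  rw [this, geom_aux]

open Finset in
private lemma sq_eq_prod {n : ℕ} (hn : n ≠ 0) :
    n ^ 2 = ∏ p ∈ n.primeFactors,
      (p ^ (n.factorization p - 1) * p ^ (n.factorization p + 1)) := by
  conv_lhs => rw [n_eq_prod hn]
  rw [← Finset.prod_pow]
  refine Finset.prod_congr rfl fun q hq => ?_
  have hq1 : 1 ≤ n.factorization q :=
    (Nat.prime_of_mem_primeFactors hq).factorization_pos_of_dvd hn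
      (Nat.dvd_of_mem_primeFactors hq)
  rw [← pow_add, ← pow_mul]
  congr 1
  omega

open Finset in
private lemma lemA {n : ℕ} (hn : n ≠ 0) {p : ℕ} (hp : p ∈ n.primeFactors) :
    sigma1 n * n.totient * p ^ (n.factorization p + 1)
      ≤ n ^ 2 * (p ^ (n.factorization p + 1) - 1) := by
  rw [sigma_totient_eq_prod hn, sq_eq_prod hn,
    ← Finset.mul_prod_erase _ _ hp, ← Finset.mul_prod_erase _ _ hp]
  set P := p ^ (n.factorization p + 1) with hP
  calc ((P - 1) * p ^ (n.factorization p - 1) *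
        ∏ q ∈ n.primeFactors.erase p,
          ((q ^ (n.factorization q + 1) - 1) * q ^ (n.factorization q - 1))) * P
      = (p ^ (n.factorization p - 1) * P * (P - 1)) *
        ∏ q ∈ n.primeFactors.erase p,
          ((q ^ (n.factorization q + 1) - 1) * q ^ (n.factorization q - 1)) := by ring
    _ ≤ (p ^ (n.factorization p - 1) * P * (P - 1)) *
        ∏ q ∈ n.primeFactors.erase p,
          (q ^ (n.factorization q - 1) * q ^ (n.factorization q + 1)) := by
        refine Nat.mul_le_mul_left _ (Finset.prod_le_prod' fun q _ => ?_)
        rw [mul_comm (q ^ (n.factorization q - 1))]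
        exact Nat.mul_le_mul_right _ (Nat.sub_le _ _)
    _ = (p ^ (n.factorization p - 1) * P *
        ∏ q ∈ n.primeFactors.erase p,
          (q ^ (n.factorization q - 1) * q ^ (n.factorization q + 1))) * (P - 1) := by ring

open Finset in
private lemma sigma_rad_lt {n : ℕ} (hn : n ≠ 0) (hne : n.primeFactors.Nonempty) :
    sigma1 n * ∏ p ∈ n.primeFactors, (p - 1) < n * ∏ p ∈ n.primeFactors, p := by
  rw [sigma1_eq_prod hn, ← Finset.prod_mul_distrib]
  have h1 : ∀ q ∈ n.primeFactors,
      (∑ k ∈ Finset.range (n.factorization q + 1), q ^ k) * (q - 1)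
        = q ^ (n.factorization q + 1) - 1 := fun q _ => by
    rw [mul_comm, geom_aux]
  rw [Finset.prod_congr rfl h1]
  have h2 : n * ∏ p ∈ n.primeFactors, p = ∏ p ∈ n.primeFactors, p ^ (n.factorization p + 1) := by
    nth_rewrite 1 [n_eq_prod hn]
    rw [← Finset.prod_mul_distrib]
    exact Finset.prod_congr rfl fun q _ => by rw [pow_succ]
  rw [h2]
  refine Finset.prod_lt_prod_of_nonempty (fun q hq => ?_) (fun q hq => Nat.sub_lt ?_ one_pos) hne
  · have h2q : 2 ≤ q := (Nat.prime_of_mem_primeFactors hq).two_le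
    have : 2 ≤ q ^ (n.factorization q + 1) :=
      le_trans h2q (Nat.le_self_pow (by omega) _)
    omega
  · exact Nat.pow_pos (Nat.prime_of_mem_primeFactors hq).pos

private lemma pair_lemma {p q : ℕ} (hp : 3 ≤ p) (hq : 3 ≤ q) (hop : Odd p) (hoq : Odd q)
    (hne : p ≠ q) : p * q ≤ 2 * ((p - 1) * (q - 1)) := by
  rcases Nat.lt_or_ge p q with h | h
  · have hq5 : 5 ≤ q := by
      rcases hoq with ⟨m, hm⟩; omega
    obtain ⟨a, rfl⟩ : ∃ a, p = 3 + a := ⟨p - 3, by omega⟩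
    obtain ⟨b, rfl⟩ : ∃ b, q = 5 + b := ⟨q - 5, by omega⟩
    have e1 : 3 + a - 1 = a + 2 := by omega
    have e2 : 5 + b - 1 = b + 4 := by omega
    rw [e1, e2]; nlinarith [Nat.zero_le (a*b), Nat.zero_le a, Nat.zero_le b]
  · have hne' : q ≠ p := fun h' => hne h'.symm
    have hp5 : 5 ≤ p := by
      rcases hop with ⟨m, hm⟩; omega
    obtain ⟨a, rfl⟩ : ∃ a, q = 3 + a := ⟨q - 3, by omega⟩
    obtain ⟨b, rfl⟩ : ∃ b, p = 5 + b := ⟨p - 5, by omega⟩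
    have e1 : 3 + a - 1 = a + 2 := by omega
    have e2 : 5 + b - 1 = b + 4 := by omega
    rw [e1, e2]; nlinarith [Nat.zero_le (a*b), Nat.zero_le a, Nat.zero_le b]

private lemma triple_sorted {p q r : ℕ} (hp : p.Prime) (hq : q.Prime) (hr : r.Prime)
    (hp2 : p ≠ 2) (hq2 : q ≠ 2) (hr2 : r ≠ 2) (hpq : p < q) (hqr : q < r)
    (h : 2 * ((p - 1) * ((q - 1) * (r - 1))) < p * (q * r)) : p * (q * r) ≤ 225 := by
  have hp3 : 3 ≤ p := by have := hp.two_le; omega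
  have hq4 : 4 ≤ q := by omega
  have hq5 : 5 ≤ q := by
    rcases Nat.eq_or_lt_of_le hq4 with h4 | h4
    · exact absurd (h4 ▸ hq) (by norm_num)
    · omega
  have hr6 : 6 ≤ r := by omega
  have hr7 : 7 ≤ r := by
    rcases Nat.eq_or_lt_of_le hr6 with h6 | h6
    · exact absurd (h6 ▸ hr) (by norm_num)
    · omega
  rcases Nat.lt_or_ge p 5 with hp5 | hp5
  · -- p = 3
    have hp3' : p = 3 := by
      interval_cases p
      · rfl
      · exact absurd hp (by norm_num)
    subst hp3'
    rcases Nat.lt_or_ge q 7 with hq7 | hq7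
    · -- q = 5
      have hq5' : q = 5 := by
        interval_cases q
        · rfl
        · exact absurd hq (by norm_num)
      subst hq5'
      -- h : 2 * (2 * (4 * (r-1))) < 15 r  ⇒ 16 (r-1) < 15 r ⇒ r ≤ 15
      have : r ≤ 15 := by omega
      omega
    · -- q ≥ 7, r ≥ 11 : contradiction
      have hr8 : 8 ≤ r := by omega
      have hr11 : 11 ≤ r := by
        rcases Nat.eq_or_lt_of_le hr8 with h8 | h8
        · exact absurd (h8 ▸ hr) (by norm_num)
        have hr9 : 9 ≤ r := by omega
        rcases Nat.eq_or_lt_of_le hr9 with h9 | h9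
        · exact absurd (h9 ▸ hr) (by norm_num)
        have hr10 : 10 ≤ r := by omega
        rcases Nat.eq_or_lt_of_le hr10 with h10 | h10
        · exact absurd (h10 ▸ hr) (by norm_num)
        · omega
      exfalso
      obtain ⟨a, rfl⟩ : ∃ a, q = 7 + a := ⟨q - 7, by omega⟩
      obtain ⟨b, rfl⟩ : ∃ b, r = 11 + b := ⟨r - 11, by omega⟩
      have e1 : 7 + a - 1 = a + 6 := by omega
      have e2 : 11 + b - 1 = b + 10 := by omega
      rw [e1, e2] at h
      norm_num at h
      nlinarith [Nat.zero_le (a*b), Nat.zero_le a, Nat.zero_le b]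
  · -- p ≥ 5 : q ≥ 7, r ≥ 11 : contradiction
    have hq7 : 7 ≤ q := by
      have hq6 : 6 ≤ q := by omega
      rcases Nat.eq_or_lt_of_le hq6 with h6 | h6
      · exact absurd (h6 ▸ hq) (by norm_num)
      · omega
    have hr8 : 8 ≤ r := by omega
    have hr11 : 11 ≤ r := by
      rcases Nat.eq_or_lt_of_le hr8 with h8 | h8
      · exact absurd (h8 ▸ hr) (by norm_num)
      have hr9 : 9 ≤ r := by omega
      rcases Nat.eq_or_lt_of_le hr9 with h9 | h9
      · exact absurd (h9 ▸ hr) (by norm_num)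
      have hr10 : 10 ≤ r := by omega
      rcases Nat.eq_or_lt_of_le hr10 with h10 | h10
      · exact absurd (h10 ▸ hr) (by norm_num)
      · omega
    exfalso
    obtain ⟨a, rfl⟩ : ∃ a, p = 5 + a := ⟨p - 5, by omega⟩
    obtain ⟨b, rfl⟩ : ∃ b, q = 7 + b := ⟨q - 7, by omega⟩
    obtain ⟨c, rfl⟩ : ∃ c, r = 11 + c := ⟨r - 11, by omega⟩
    have e1 : 5 + a - 1 = a + 4 := by omega
    have e2 : 7 + b - 1 = b + 6 := by omega
    have e3 : 11 + c - 1 = c + 10 := by omega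
    rw [e1, e2, e3] at h
    nlinarith [Nat.zero_le (a*b*c), Nat.zero_le (a*b), Nat.zero_le (a*c), Nat.zero_le (b*c)]

private lemma triple_unsorted {a b c : ℕ} (ha : a.Prime) (hb : b.Prime) (hc : c.Prime)
    (ha2 : a ≠ 2) (hb2 : b ≠ 2) (hc2 : c ≠ 2) (hab : a ≠ b) (hac : a ≠ c) (hbc : b ≠ c)
    (h : 2 * ((a - 1) * ((b - 1) * (c - 1))) < a * (b * c)) : a * (b * c) ≤ 225 := by
  rcases lt_trichotomy a b with h1 | h1 | h1
  · rcases lt_trichotomy b c with h2 | h2 | h2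
    · exact triple_sorted ha hb hc ha2 hb2 hc2 h1 h2 h
    · exact absurd h2 hbc
    · rcases lt_trichotomy a c with h3 | h3 | h3
      · have key := triple_sorted ha hc hb ha2 hc2 hb2 h3 h2
          (lt_of_eq_of_lt (by ring) (lt_of_lt_of_eq h (by ring)))
        calc a * (b * c) = a * (c * b) := by ring
          _ ≤ 225 := key
      · exact absurd h3 hac
      · have key := triple_sorted hc ha hb hc2 ha2 hb2 h3 h1
          (lt_of_eq_of_lt (by ring) (lt_of_lt_of_eq h (by ring)))
        calc a * (b * c) = c * (a * b) := by ring
          _ ≤ 225 := key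
  · exact absurd h1 hab
  · rcases lt_trichotomy a c with h2 | h2 | h2
    · have key := triple_sorted hb ha hc hb2 ha2 hc2 h1 h2
        (lt_of_eq_of_lt (by ring) (lt_of_lt_of_eq h (by ring)))
      calc a * (b * c) = b * (a * c) := by ring
        _ ≤ 225 := key
    · exact absurd h2 hac
    · rcases lt_trichotomy b c with h3 | h3 | h3
      · have key := triple_sorted hb hc ha hb2 hc2 ha2 h3 h2
          (lt_of_eq_of_lt (by ring) (lt_of_lt_of_eq h (by ring)))
        calc a * (b * c) = b * (c * a) := by ring
          _ ≤ 225 := key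
      · exact absurd h3 hbc
      · have key := triple_sorted hc hb ha hc2 hb2 ha2 h3 h1
          (lt_of_eq_of_lt (by ring) (lt_of_lt_of_eq h (by ring)))
        calc a * (b * c) = c * (b * a) := by ring
          _ ≤ 225 := key

open Finset in
private lemma exists_small_prime {n : ℕ} (hn : 0 < n) (hodd : Odd n)
    (hnd : 2 * n ≤ sigma1 n) :
    ∃ p ∈ n.primeFactors, 9 * (p ^ (n.factorization p + 1)) ^ 2 < 100 * n := by
  by_contra hcon
  push_neg at hcon
  have hn0 : n ≠ 0 := hn.ne'
  have hne : n.primeFactors.Nonempty := by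
    rw [Finset.nonempty_iff_ne_empty]
    intro hemp
    rcases Nat.primeFactors_eq_empty.mp hemp with h | h
    · exact hn0 h
    · subst h; simp [sigma1] at hnd
  have hoddp : ∀ p ∈ n.primeFactors, p ≠ 2 := by
    intro p hp h2
    have hdvd : p ∣ n := Nat.dvd_of_mem_primeFactors hp
    rw [h2] at hdvd
    exact (Nat.not_even_iff_odd.mpr hodd) ((even_iff_two_dvd).mpr hdvd)
  have hradlt := sigma_rad_lt hn0 hne
  have hrad : 2 * ∏ p ∈ n.primeFactors, (p - 1) < ∏ p ∈ n.primeFactors, p := by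
    refine Nat.lt_of_mul_lt_mul_left (a := n) ?_
    calc n * (2 * ∏ p ∈ n.primeFactors, (p - 1))
        = (2 * n) * ∏ p ∈ n.primeFactors, (p - 1) := by ring
      _ ≤ sigma1 n * ∏ p ∈ n.primeFactors, (p - 1) := Nat.mul_le_mul_right _ hnd
      _ < n * ∏ p ∈ n.primeFactors, p := hradlt
  set k := n.primeFactors.card with hk
  have hprodbound : (100 * n) ^ k ≤ 9 ^ k * (∏ p ∈ n.primeFactors, p) ^ 2 * n ^ 2 := by
    calc (100 * n) ^ k = ∏ _p ∈ n.primeFactors, (100 * n) := (Finset.prod_const _).symm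
      _ ≤ ∏ p ∈ n.primeFactors, (9 * (p ^ (n.factorization p + 1)) ^ 2) :=
          Finset.prod_le_prod' fun p hp => hcon p hp
      _ = 9 ^ k * ∏ p ∈ n.primeFactors, (p ^ (n.factorization p + 1)) ^ 2 := by
          rw [Finset.prod_mul_distrib, Finset.prod_const]
      _ = 9 ^ k * ∏ p ∈ n.primeFactors, ((p ^ (n.factorization p)) ^ 2 * p ^ 2) := by
          refine congrArg _ (Finset.prod_congr rfl fun q _ => ?_)
          rw [pow_succ q (n.factorization q), mul_pow]
      _ = 9 ^ k * ((∏ p ∈ n.primeFactors, p ^ (n.factorization p)) ^ 2 *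
            (∏ p ∈ n.primeFactors, p) ^ 2) := by
          rw [Finset.prod_mul_distrib, Finset.prod_pow, Finset.prod_pow]
      _ = 9 ^ k * (∏ p ∈ n.primeFactors, p) ^ 2 * n ^ 2 := by
          rw [← n_eq_prod hn0]; ring
  have hradn : (∏ p ∈ n.primeFactors, p) ≤ n := Nat.le_of_dvd hn (Nat.prod_primeFactors_dvd n)
  have hk1 : 1 ≤ k := Finset.card_pos.mpr hne
  rcases lt_or_ge k 4 with hk4 | hk4
  · interval_cases k
    · -- k = 1
      obtain ⟨p, hs⟩ := Finset.card_eq_one.mp hk.symm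
      have hp : p ∈ n.primeFactors := hs ▸ Finset.mem_singleton_self p
      have hp2 : 2 ≤ p := (Nat.prime_of_mem_primeFactors hp).two_le
      rw [hs, Finset.prod_singleton, Finset.prod_singleton] at hrad
      omega
    · -- k = 2
      obtain ⟨p, q, hpq, hs⟩ := Finset.card_eq_two.mp hk.symm
      have hp : p ∈ n.primeFactors := by rw [hs]; simp
      have hq : q ∈ n.primeFactors := by rw [hs]; simp
      have hpp := Nat.prime_of_mem_primeFactors hp
      have hqp := Nat.prime_of_mem_primeFactors hq
      have hp3 : 3 ≤ p := by have := hpp.two_le; have := hoddp p hp; omega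
      have hq3 : 3 ≤ q := by have := hqp.two_le; have := hoddp q hq; omega
      rw [hs, Finset.prod_pair hpq, Finset.prod_pair hpq] at hrad
      have := pair_lemma hp3 hq3 (hpp.odd_of_ne_two (hoddp p hp))
        (hqp.odd_of_ne_two (hoddp q hq)) hpq
      omega
    · -- k = 3
      obtain ⟨p, q, r, hpq, hpr, hqr, hs⟩ := Finset.card_eq_three.mp hk.symm
      have hp : p ∈ n.primeFactors := by rw [hs]; simp
      have hq : q ∈ n.primeFactors := by rw [hs]; simp
      have hr : r ∈ n.primeFactors := by rw [hs]; simp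
      have hpp := Nat.prime_of_mem_primeFactors hp
      have hqp := Nat.prime_of_mem_primeFactors hq
      have hrp := Nat.prime_of_mem_primeFactors hr
      have hprod3 : ∀ f : ℕ → ℕ, ∏ x ∈ n.primeFactors, f x = f p * (f q * f r) := by
        intro f
        rw [hs, Finset.prod_insert (by simp [hpq, hpr]), Finset.prod_pair hqr]
      have hradeq : (∏ x ∈ n.primeFactors, x) = p * (q * r) := hprod3 (fun x => x)
      rw [hprod3 (fun x => x - 1), hradeq] at hrad
      have h225 : p * (q * r) ≤ 225 :=
        triple_unsorted hpp hqp hrp (hoddp p hp) (hoddp q hq) (hoddp r hr) hpq hpr hqr hrad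
      rw [hradeq] at hprodbound hradn
      have hRpos : 0 < p * (q * r) :=
        Nat.mul_pos hpp.pos (Nat.mul_pos hqp.pos hrp.pos)
      set R := p * (q * r) with hR
      have h6 : 10 ^ 6 * n ≤ 729 * R ^ 2 := by
        have hstep : (10 ^ 6 * n) * n ^ 2 ≤ (729 * R ^ 2) * n ^ 2 := by
          calc (10 ^ 6 * n) * n ^ 2 = (100 * n) ^ 3 := by ring
            _ ≤ 9 ^ 3 * R ^ 2 * n ^ 2 := hprodbound
            _ = (729 * R ^ 2) * n ^ 2 := by ring
        exact Nat.le_of_mul_le_mul_right hstep (by positivity)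
      nlinarith [h6, hradn, h225, hRpos]
  · -- k ≥ 4
    have h1 : 100 ^ k * n ^ k ≤ 9 ^ k * n ^ k := by
      calc 100 ^ k * n ^ k = (100 * n) ^ k := (mul_pow _ _ _).symm
        _ ≤ 9 ^ k * (∏ p ∈ n.primeFactors, p) ^ 2 * n ^ 2 := hprodbound
        _ ≤ 9 ^ k * n ^ 2 * n ^ 2 :=
            Nat.mul_le_mul_right _ (Nat.mul_le_mul_left _ (Nat.pow_le_pow_left hradn 2))
        _ = 9 ^ k * n ^ 4 := by ring
        _ ≤ 9 ^ k * n ^ k := Nat.mul_le_mul_left _ (Nat.pow_le_pow_right hn hk4)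
    have h2 : 100 ^ k ≤ 9 ^ k := Nat.le_of_mul_le_mul_right h1 (by positivity)
    have h3 : 9 ^ k < 100 ^ k := Nat.pow_lt_pow_left (by norm_num) (by omega)
    omega

theorem surplus_lower_bound_odd_nondeficient (n : ℕ) (hn : 0 < n) (hodd : Odd n)
    (hnondef : 2 * n ≤ sigma1 n) :
    S n > 3 / (5 * Real.sqrt n) := by
  obtain ⟨p, hp, hsmall⟩ := exists_small_prime hn hodd hnondef
  have hn0 : n ≠ 0 := hn.ne'
  have hpp := Nat.prime_of_mem_primeFactors hp
  have hA := lemA hn0 hp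
  set e := n.factorization p with he
  set P := p ^ (e + 1) with hPdef
  have hP2 : 2 ≤ P := le_trans hpp.two_le (Nat.le_self_pow (by omega) _)
  have hφpos : 0 < n.totient := Nat.totient_pos.mpr hn
  have hkey : 2 * n.totient * P + n ≤ n * P := by
    have h1 : n * (2 * n.totient * P) ≤ n * (n * (P - 1)) := by
      calc n * (2 * n.totient * P) = (2 * n) * (n.totient * P) := by ring
        _ ≤ sigma1 n * (n.totient * P) := Nat.mul_le_mul_right _ hnondef
        _ = sigma1 n * n.totient * P := by ring
        _ ≤ n ^ 2 * (P - 1) := hA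
        _ = n * (n * (P - 1)) := by ring
    have h2 : 2 * n.totient * P ≤ n * (P - 1) := Nat.le_of_mul_le_mul_left h1 hn
    obtain ⟨P', hP'⟩ : ∃ P', P = P' + 1 := ⟨P - 1, by omega⟩
    rw [hP'] at h2 ⊢
    simp only [Nat.add_sub_cancel] at h2
    have : n * (P' + 1) = n * P' + n := by ring
    rw [this]
    have : 2 * n.totient * (P' + 1) = 2 * n.totient * P' + 2 * n.totient := by ring
    nlinarith [h2]
  -- pass to the reals
  have hNpos : (0:ℝ) < (n:ℝ) := by exact_mod_cast hn
  have hFpos : (0:ℝ) < (n.totient:ℝ) := by exact_mod_cast hφpos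
  have hQpos : (0:ℝ) < (P:ℝ) := by exact_mod_cast (by omega : 0 < P)
  have hkeyR : 2 * (n.totient:ℝ) * (P:ℝ) + (n:ℝ) ≤ (n:ℝ) * (P:ℝ) := by exact_mod_cast hkey
  have h9R : 9 * (P:ℝ) ^ 2 < 100 * (n:ℝ) := by exact_mod_cast hsmall
  have hsq : 0 < Real.sqrt n := Real.sqrt_pos.mpr hNpos
  have h2F : 2 * (n.totient:ℝ) < (n:ℝ) := by
    have hmul : (2 * (n.totient:ℝ)) * (P:ℝ) < (n:ℝ) * (P:ℝ) := by nlinarith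
    exact lt_of_mul_lt_mul_right hmul hQpos.le
  have hmain : 2 / (P:ℝ) ≤ (n:ℝ) / (n.totient:ℝ) - 2 := by
    rw [le_sub_iff_add_le, div_add' _ _ _ hQpos.ne', div_le_div_iff₀ hQpos hFpos]
    nlinarith [hkeyR, h2F]
  have hsqrt : 3 * (P:ℝ) < 10 * Real.sqrt n := by
    have h1 : (3 * (P:ℝ)) ^ 2 < (10 * Real.sqrt n) ^ 2 := by
      rw [mul_pow, mul_pow, Real.sq_sqrt hNpos.le]
      nlinarith [h9R]
    exact lt_of_pow_lt_pow_left₀ 2 (by positivity) h1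
  have hfinal : 3 / (5 * Real.sqrt n) < 2 / (P:ℝ) := by
    rw [div_lt_div_iff₀ (by positivity) hQpos]
    linarith [hsqrt]
  have : S n = (n:ℝ) / (n.totient:ℝ) - 2 := rfl
  rw [this]
  linarith [hmain, hfinal]
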